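/- Let D ⊆ ℝ and f : D → ℝ̄ where ℝ̄ = ℝ ∪ {−∞,+∞}. Then for all n ∈ ℕ, all points x₀ < x₁ < ⋯ < x_{n+1} in D, and all i ∈ {1,…,n}: min_{1 ≤ j ≤ n} ⌊x_{j−1}, x_j, x_{j+1}; f⌋ ≤ ⌊x₀, x_i, x_{n+1}; f⌋ ≤ ⌈x₀, x_i, x_{n+1}; f⌉ ≤ max_{1 ≤ j ≤ n} ⌈x_{j−1}, x_j, x_{j+1}; f⌉. -/

import Mathlib

open Classical in
/-- The lower sum `x ∔ y` on the extended reals: `x + y` if both are `> -∞`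
(with `(+∞) ∔ (+∞) = +∞`), and `-∞` as soon as one summand is `-∞`. -/
noncomputable def lsum (a b : EReal) : EReal := if a = ⊥ ∨ b = ⊥ then ⊥ else a + b

open Classical in
/-- The upper sum `x ⊎ y` on the extended reals: `x + y` if both are `< +∞`
(with `(-∞) ⊎ (-∞) = -∞`), and `+∞` as soon as one summand is `+∞`. -/
noncomputable def usum (a b : EReal) : EReal := if a = ⊤ ∨ b = ⊤ then ⊤ else a + b

/-- The lower second-order divided difference `⌊x,y,z;f⌋`. -/
noncomputable def ldd (f : ℝ → EReal) (x y z : ℝ) : EReal :=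
  lsum (lsum (((1 / ((y - x) * (z - x)) : ℝ) : EReal) * f x)
             (((1 / ((x - y) * (z - y)) : ℝ) : EReal) * f y))
       (((1 / ((x - z) * (y - z)) : ℝ) : EReal) * f z)

/-- The upper second-order divided difference `⌈x,y,z;f⌉`. -/
noncomputable def udd (f : ℝ → EReal) (x y z : ℝ) : EReal :=
  usum (usum (((1 / ((y - x) * (z - x)) : ℝ) : EReal) * f x)
             (((1 / ((x - y) * (z - y)) : ℝ) : EReal) * f y))
       (((1 / ((x - z) * (y - z)) : ℝ) : EReal) * f z)

/-- `f : I → ℝ̄` is lower `M`-convex: `⌊x, M(x,y), y; f⌋ ≥ 0` for all `x < y` in `I`. -/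
def LowerConvexWrt (I : Set ℝ) (M : ℝ → ℝ → ℝ) (f : ℝ → EReal) : Prop :=
  ∀ x ∈ I, ∀ y ∈ I, x < y → 0 ≤ ldd f x (M x y) y

/-- `f : I → ℝ̄` is upper `M`-convex: `⌈x, M(x,y), y; f⌉ ≥ 0` for all `x < y` in `I`. -/
def UpperConvexWrt (I : Set ℝ) (M : ℝ → ℝ → ℝ) (f : ℝ → EReal) : Prop :=
  ∀ x ∈ I, ∀ y ∈ I, x < y → 0 ≤ udd f x (M x y) y

namespace Stmt11Aux

lemma lsum_eq_add (a b : EReal) : lsum a b = a + b := by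
  unfold lsum
  split_ifs with h
  · rcases h with h | h <;> simp [h]
  · rfl

lemma ldd_eq (f : ℝ → EReal) (x y z : ℝ) : ldd f x y z =
    ((1 / ((y - x) * (z - x)) : ℝ) : EReal) * f x +
    ((1 / ((x - y) * (z - y)) : ℝ) : EReal) * f y +
    ((1 / ((x - z) * (y - z)) : ℝ) : EReal) * f z := by
  rw [ldd, lsum_eq_add, lsum_eq_add]

section coeffs
variable {x y z : ℝ}

lemma cx_pos (h1 : x < y) (h2 : y < z) : 0 < 1 / ((y - x) * (z - x)) :=
  one_div_pos.2 (mul_pos (by linarith) (by linarith))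

lemma cy_neg (h1 : x < y) (h2 : y < z) : 1 / ((x - y) * (z - y)) < 0 :=
  one_div_neg.2 (mul_neg_of_neg_of_pos (by linarith) (by linarith))

lemma cz_pos (h1 : x < y) (h2 : y < z) : 0 < 1 / ((x - z) * (y - z)) :=
  one_div_pos.2 (mul_pos_of_neg_of_neg (by linarith) (by linarith))

variable {f : ℝ → EReal}

lemma ldd_bot_left (h1 : x < y) (h2 : y < z) (hf : f x = ⊥) : ldd f x y z = ⊥ := by
  rw [ldd_eq, hf, EReal.coe_mul_bot_of_pos (cx_pos h1 h2), EReal.bot_add, EReal.bot_add]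

lemma ldd_bot_mid (h1 : x < y) (h2 : y < z) (hf : f y = ⊤) : ldd f x y z = ⊥ := by
  rw [ldd_eq, hf, EReal.coe_mul_top_of_neg (cy_neg h1 h2), EReal.add_bot, EReal.bot_add]

lemma ldd_bot_right (h1 : x < y) (h2 : y < z) (hf : f z = ⊥) : ldd f x y z = ⊥ := by
  rw [ldd_eq, hf, EReal.coe_mul_bot_of_pos (cz_pos h1 h2), EReal.add_bot]

lemma mul_pos_ne_bot {c : ℝ} (hc : 0 < c) {v : EReal} (hv : v ≠ ⊥) : (c : EReal) * v ≠ ⊥ := by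
  induction v using EReal.rec with
  | bot => exact absurd rfl hv
  | coe r => rw [← EReal.coe_mul]; exact EReal.coe_ne_bot _
  | top => rw [EReal.coe_mul_top_of_pos hc]; simp

lemma mul_neg_ne_bot {c : ℝ} (hc : c < 0) {v : EReal} (hv : v ≠ ⊤) : (c : EReal) * v ≠ ⊥ := by
  induction v using EReal.rec with
  | bot => rw [EReal.coe_mul_bot_of_neg hc]; simp
  | coe r => rw [← EReal.coe_mul]; exact EReal.coe_ne_bot _
  | top => exact absurd rfl hv

lemma ldd_top (h1 : x < y) (h2 : y < z) (hx : f x ≠ ⊥) (hy : f y ≠ ⊤) (hz : f z ≠ ⊥)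
    (h : f x = ⊤ ∨ f y = ⊥ ∨ f z = ⊤) : ldd f x y z = ⊤ := by
  rw [ldd_eq]
  have t1 : ((1 / ((y - x) * (z - x)) : ℝ) : EReal) * f x ≠ ⊥ := mul_pos_ne_bot (cx_pos h1 h2) hx
  have t2 : ((1 / ((x - y) * (z - y)) : ℝ) : EReal) * f y ≠ ⊥ := mul_neg_ne_bot (cy_neg h1 h2) hy
  have t3 : ((1 / ((x - z) * (y - z)) : ℝ) : EReal) * f z ≠ ⊥ := mul_pos_ne_bot (cz_pos h1 h2) hz
  rcases h with h | h | h
  · rw [h, EReal.coe_mul_top_of_pos (cx_pos h1 h2), EReal.top_add_of_ne_bot t2,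
      EReal.top_add_of_ne_bot t3]
  · rw [h, EReal.coe_mul_bot_of_neg (cy_neg h1 h2), EReal.add_top_of_ne_bot t1,
      EReal.top_add_of_ne_bot t3]
  · rw [h, EReal.coe_mul_top_of_pos (cz_pos h1 h2)]
    refine EReal.add_top_of_ne_bot fun hc => ?_
    rcases EReal.add_eq_bot_iff.1 hc with hc | hc
    exacts [t1 hc, t2 hc]

end coeffs

/-- The real second-order divided difference. -/
noncomputable def rdd (A B C x y z : ℝ) : ℝ :=
  1 / ((y - x) * (z - x)) * A + 1 / ((x - y) * (z - y)) * B + 1 / ((x - z) * (y - z)) * C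

lemma ldd_coe {f : ℝ → EReal} {x y z A B C : ℝ} (hx : f x = (A : ℝ)) (hy : f y = (B : ℝ))
    (hz : f z = (C : ℝ)) : ldd f x y z = ((rdd A B C x y z : ℝ) : EReal) := by
  rw [ldd_eq, hx, hy, hz, rdd, ← EReal.coe_mul, ← EReal.coe_mul, ← EReal.coe_mul,
    ← EReal.coe_add, ← EReal.coe_add]

lemma rdd_id1 {a b c d : ℝ} (hab : a < b) (hbc : b < c) (hcd : c < d) (A B C D : ℝ) :
    rdd A B D a b d = (c - a) / (d - a) * rdd A B C a b c
      + (d - c) / (d - a) * rdd B C D b c d := by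
  have h1 : b - a ≠ 0 := by linarith
  have h2 : c - a ≠ 0 := by linarith
  have h3 : d - a ≠ 0 := by linarith
  have h4 : c - b ≠ 0 := by linarith
  have h5 : d - b ≠ 0 := by linarith
  have h6 : d - c ≠ 0 := by linarith
  have h1' : a - b ≠ 0 := by linarith
  have h4' : b - c ≠ 0 := by linarith
  have h2' : a - c ≠ 0 := by linarith
  have h3' : a - d ≠ 0 := by linarith
  have h5' : b - d ≠ 0 := by linarith
  have h6' : c - d ≠ 0 := by linarith
  have e1 : 1 / ((b - a) * (d - a)) = (c - a) / (d - a) * (1 / ((b - a) * (c - a))) := by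
    field_simp
  have e2 : 1 / ((a - b) * (d - b)) = (c - a) / (d - a) * (1 / ((a - b) * (c - b)))
      + (d - c) / (d - a) * (1 / ((c - b) * (d - b))) := by
    field_simp; ring
  have e3 : (c - a) / (d - a) * (1 / ((a - c) * (b - c)))
      + (d - c) / (d - a) * (1 / ((b - c) * (d - c))) = 0 := by
    field_simp; ring
  have e4 : 1 / ((a - d) * (b - d)) = (d - c) / (d - a) * (1 / ((b - d) * (c - d))) := by
    field_simp; ring
  simp only [rdd]
  rw [e1, e2, e4]
  linear_combination -C * e3

lemma rdd_id2 {a b c d : ℝ} (hab : a < b) (hbc : b < c) (hcd : c < d) (A B C D : ℝ) :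
    rdd A C D a c d = (b - a) / (d - a) * rdd A B C a b c
      + (d - b) / (d - a) * rdd B C D b c d := by
  have h1 : b - a ≠ 0 := by linarith
  have h2 : c - a ≠ 0 := by linarith
  have h3 : d - a ≠ 0 := by linarith
  have h4 : c - b ≠ 0 := by linarith
  have h5 : d - b ≠ 0 := by linarith
  have h6 : d - c ≠ 0 := by linarith
  have h1' : a - b ≠ 0 := by linarith
  have h4' : b - c ≠ 0 := by linarith
  have h2' : a - c ≠ 0 := by linarith
  have h3' : a - d ≠ 0 := by linarith
  have h5' : b - d ≠ 0 := by linarith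
  have h6' : c - d ≠ 0 := by linarith
  have e1 : 1 / ((c - a) * (d - a)) = (b - a) / (d - a) * (1 / ((b - a) * (c - a))) := by
    field_simp
  have e2 : (b - a) / (d - a) * (1 / ((a - b) * (c - b)))
      + (d - b) / (d - a) * (1 / ((c - b) * (d - b))) = 0 := by
    field_simp; ring
  have e3 : 1 / ((a - c) * (d - c)) = (b - a) / (d - a) * (1 / ((a - c) * (b - c)))
      + (d - b) / (d - a) * (1 / ((b - c) * (d - c))) := by
    field_simp; ring
  have e4 : 1 / ((a - d) * (c - d)) = (d - b) / (d - a) * (1 / ((b - d) * (c - d))) := by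
    field_simp; ring
  simp only [rdd]
  rw [e1, e3, e4]
  linear_combination -B * e2

lemma min_le_combo {P Q l m : ℝ} (hl : 0 ≤ l) (hm : 0 ≤ m) (h : l + m = 1) :
    min P Q ≤ l * P + m * Q := by
  have h1 := mul_le_mul_of_nonneg_left (min_le_left P Q) hl
  have h2 := mul_le_mul_of_nonneg_left (min_le_right P Q) hm
  have h3 : l * min P Q + m * min P Q = min P Q := by rw [← add_mul, h, one_mul]
  linarith

lemma exists_real {v : EReal} (h1 : v ≠ ⊥) (h2 : v ≠ ⊤) : ∃ r : ℝ, v = (r : EReal) := by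
  induction v using EReal.rec with
  | bot => exact absurd rfl h1
  | coe r => exact ⟨r, rfl⟩
  | top => exact absurd rfl h2

lemma coe_min (P Q : ℝ) :
    min ((P : ℝ) : EReal) ((Q : ℝ) : EReal) = ((min P Q : ℝ) : EReal) := by
  rcases le_total P Q with h | h
  · rw [min_eq_left h, min_eq_left (EReal.coe_le_coe_iff.2 h)]
  · rw [min_eq_right h, min_eq_right (EReal.coe_le_coe_iff.2 h)]

/-- Step lemma 1: dropping the interior point `c` from the right part. -/
lemma step1 {f : ℝ → EReal} {a b c d : ℝ} (hab : a < b) (hbc : b < c) (hcd : c < d) :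
    min (ldd f a b c) (ldd f b c d) ≤ ldd f a b d := by
  by_cases hfa : f a = ⊥
  · exact le_trans (min_le_left _ _) (by rw [ldd_bot_left hab hbc hfa]; exact bot_le)
  by_cases hfbT : f b = ⊤
  · exact le_trans (min_le_left _ _) (by rw [ldd_bot_mid hab hbc hfbT]; exact bot_le)
  by_cases hfbB : f b = ⊥
  · exact le_trans (min_le_right _ _) (by rw [ldd_bot_left hbc hcd hfbB]; exact bot_le)
  by_cases hfd : f d = ⊥
  · exact le_trans (min_le_right _ _) (by rw [ldd_bot_right hbc hcd hfd]; exact bot_le)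
  by_cases hfaT : f a = ⊤
  · rw [ldd_top hab (hbc.trans hcd) hfa hfbT hfd (Or.inl hfaT)]; exact le_top
  by_cases hfdT : f d = ⊤
  · rw [ldd_top hab (hbc.trans hcd) hfa hfbT hfd (Or.inr (Or.inr hfdT))]; exact le_top
  by_cases hfcB : f c = ⊥
  · exact le_trans (min_le_left _ _) (by rw [ldd_bot_right hab hbc hfcB]; exact bot_le)
  by_cases hfcT : f c = ⊤
  · exact le_trans (min_le_right _ _) (by rw [ldd_bot_mid hbc hcd hfcT]; exact bot_le)
  obtain ⟨A, hA⟩ := exists_real hfa hfaT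
  obtain ⟨B, hB⟩ := exists_real hfbB hfbT
  obtain ⟨C, hC⟩ := exists_real hfcB hfcT
  obtain ⟨D, hD⟩ := exists_real hfd hfdT
  rw [ldd_coe hA hB hD, ldd_coe hA hB hC, ldd_coe hB hC hD, coe_min, EReal.coe_le_coe_iff,
    rdd_id1 hab hbc hcd A B C D]
  have h3 : d - a ≠ 0 := by linarith
  exact min_le_combo (div_nonneg (by linarith) (by linarith))
    (div_nonneg (by linarith) (by linarith)) (by field_simp; ring)

/-- Step lemma 2: dropping the interior point `b` from the left part. -/
lemma step2 {f : ℝ → EReal} {a b c d : ℝ} (hab : a < b) (hbc : b < c) (hcd : c < d) :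
    min (ldd f a b c) (ldd f b c d) ≤ ldd f a c d := by
  by_cases hfa : f a = ⊥
  · exact le_trans (min_le_left _ _) (by rw [ldd_bot_left hab hbc hfa]; exact bot_le)
  by_cases hfcT : f c = ⊤
  · exact le_trans (min_le_right _ _) (by rw [ldd_bot_mid hbc hcd hfcT]; exact bot_le)
  by_cases hfd : f d = ⊥
  · exact le_trans (min_le_right _ _) (by rw [ldd_bot_right hbc hcd hfd]; exact bot_le)
  by_cases hfcB : f c = ⊥
  · rw [ldd_top (hab.trans hbc) hcd hfa hfcT hfd (Or.inr (Or.inl hfcB))]; exact le_top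
  by_cases hfaT : f a = ⊤
  · rw [ldd_top (hab.trans hbc) hcd hfa hfcT hfd (Or.inl hfaT)]; exact le_top
  by_cases hfdT : f d = ⊤
  · rw [ldd_top (hab.trans hbc) hcd hfa hfcT hfd (Or.inr (Or.inr hfdT))]; exact le_top
  by_cases hfbB : f b = ⊥
  · exact le_trans (min_le_right _ _) (by rw [ldd_bot_left hbc hcd hfbB]; exact bot_le)
  by_cases hfbT : f b = ⊤
  · exact le_trans (min_le_left _ _) (by rw [ldd_bot_mid hab hbc hfbT]; exact bot_le)
  obtain ⟨A, hA⟩ := exists_real hfa hfaT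
  obtain ⟨B, hB⟩ := exists_real hfbB hfbT
  obtain ⟨C, hC⟩ := exists_real hfcB hfcT
  obtain ⟨D, hD⟩ := exists_real hfd hfdT
  rw [ldd_coe hA hC hD, ldd_coe hA hB hC, ldd_coe hB hC hD, coe_min, EReal.coe_le_coe_iff,
    rdd_id2 hab hbc hcd A B C D]
  have h3 : d - a ≠ 0 := by linarith
  exact min_le_combo (div_nonneg (by linarith) (by linarith))
    (div_nonneg (by linarith) (by linarith)) (by field_simp; ring)

lemma chain_lt {x : ℕ → ℝ} {n : ℕ} (h : ∀ k ≤ n, x k < x (k + 1)) :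
    ∀ k l, k < l → l ≤ n + 1 → x k < x l := by
  intro k l
  induction l with
  | zero => omega
  | succ m ih =>
    intro hkl hl
    rcases Nat.lt_or_ge k m with h' | h'
    · exact lt_trans (ih h' (by omega)) (h m (by omega))
    · have hkm : k = m := by omega
      subst hkm
      exact h k (by omega)

/-- The main lower chain inequality, by strong induction. -/
lemma lower_chain (f : ℝ → EReal) :
    ∀ n : ℕ, 1 ≤ n → ∀ x : ℕ → ℝ, (∀ k ≤ n, x k < x (k + 1)) →
      ∀ i : ℕ, 1 ≤ i → i ≤ n → ∀ μ : EReal,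
      (∀ j : ℕ, 1 ≤ j → j ≤ n → μ ≤ ldd f (x (j - 1)) (x j) (x (j + 1))) →
      μ ≤ ldd f (x 0) (x i) (x (n + 1)) := by
  intro n
  induction n using Nat.strong_induction_on with
  | _ n IH =>
    intro hn x hx i hi1 hi2 μ hμ
    rcases eq_or_lt_of_le hn with h1 | h1
    · have hi : i = 1 := by omega
      have hn1 : n = 1 := h1.symm
      subst hi; subst hn1
      exact hμ 1 le_rfl le_rfl
    · -- n ≥ 2
      rcases Nat.lt_or_ge i n with hin | hin
      · -- i < n : drop the point x n from the chain on the right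
        have hab : x 0 < x i := chain_lt hx 0 i (by omega) (by omega)
        have hbc : x i < x n := chain_lt hx i n hin (by omega)
        have hcd : x n < x (n + 1) := hx n le_rfl
        refine le_trans (le_min ?_ ?_) (step1 hab hbc hcd)
        · -- μ ≤ ldd f (x 0) (x i) (x n)
          have h := IH (n - 1) (by omega) (by omega) x (fun k hk => hx k (by omega)) i hi1
            (by omega) μ (fun j hj1 hj2 => hμ j hj1 (by omega))
          have e : n - 1 + 1 = n := by omega
          rwa [e] at h
        · -- μ ≤ ldd f (x i) (x n) (x (n + 1))
          have h := IH (n - i) (by omega) (by omega) (fun k => x (i + k))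
            (fun k hk => by
              show x (i + k) < x (i + (k + 1))
              have e : i + (k + 1) = (i + k) + 1 := by omega
              rw [e]
              exact hx (i + k) (by omega))
            (n - i) (by omega) le_rfl μ
            (fun j hj1 hj2 => by
              have e1 : i + (j - 1) = (i + j) - 1 := by omega
              have e2 : i + (j + 1) = (i + j) + 1 := by omega
              simp only [e1, e2]
              exact hμ (i + j) (by omega) (by omega))
          have e0 : i + 0 = i := by omega
          have e1 : i + (n - i) = n := by omega
          have e2 : i + (n - i + 1) = n + 1 := by omega
          rwa [e0, e1, e2] at h
      · -- i = n : drop the point x 1 from the chain on the left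
        have hie : i = n := by omega
        subst hie
        have hab : x 0 < x 1 := hx 0 (by omega)
        have hbc : x 1 < x i := chain_lt hx 1 i (by omega) (by omega)
        have hcd : x i < x (i + 1) := hx i le_rfl
        refine le_trans (le_min ?_ ?_) (step2 hab hbc hcd)
        · -- μ ≤ ldd f (x 0) (x 1) (x i)
          have h := IH (i - 1) (by omega) (by omega) x (fun k hk => hx k (by omega)) 1
            le_rfl (by omega) μ (fun j hj1 hj2 => hμ j hj1 (by omega))
          have e : i - 1 + 1 = i := by omega
          rwa [e] at h
        · -- μ ≤ ldd f (x 1) (x i) (x (i + 1))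
          have h := IH (i - 1) (by omega) (by omega) (fun k => x (1 + k))
            (fun k hk => by
              show x (1 + k) < x (1 + (k + 1))
              have e : 1 + (k + 1) = (1 + k) + 1 := by omega
              rw [e]
              exact hx (1 + k) (by omega))
            (i - 1) (by omega) le_rfl μ
            (fun j hj1 hj2 => by
              have e1 : 1 + (j - 1) = (1 + j) - 1 := by omega
              have e2 : 1 + (j + 1) = (1 + j) + 1 := by omega
              simp only [e1, e2]
              exact hμ (1 + j) (by omega) (by omega))
          have e0 : 1 + 0 = 1 := by omega
          have e1 : 1 + (i - 1) = i := by omega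
          have e2 : 1 + (i - 1 + 1) = i + 1 := by omega
          rwa [e0, e1, e2] at h

lemma lsum_neg (a b : EReal) : lsum (-a) (-b) = - usum a b := by
  unfold lsum usum
  split_ifs with h1 h2 h2
  · simp
  · exact absurd (by simpa [EReal.neg_eq_bot_iff] using h1) h2
  · exact absurd (by simpa [EReal.neg_eq_bot_iff] using h2) h1
  · push_neg at h2
    rw [EReal.neg_add (Or.inr h2.2) (Or.inl h2.1), sub_eq_add_neg]

lemma udd_eq_neg_ldd (f : ℝ → EReal) (x y z : ℝ) :
    udd f x y z = - ldd (fun t => - f t) x y z := by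
  rw [ldd]
  simp only [mul_neg]
  rw [lsum_neg, lsum_neg, neg_neg, udd]

lemma lsum_le_usum (a b : EReal) : lsum a b ≤ usum a b := by
  unfold lsum usum
  split_ifs
  · exact bot_le
  · exact bot_le
  · exact le_top
  · exact le_rfl

lemma usum_mono_left {a a' : EReal} (h : a ≤ a') (b : EReal) : usum a b ≤ usum a' b := by
  unfold usum
  split_ifs with h1 h2 h2
  · exact le_rfl
  · exfalso
    rcases h1 with h1 | h1
    · rw [h1] at h
      exact h2 (Or.inl (top_le_iff.1 h))
    · exact h2 (Or.inr h1)
  · exact le_top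
  · exact add_le_add h le_rfl

lemma ldd_le_udd (f : ℝ → EReal) (x y z : ℝ) : ldd f x y z ≤ udd f x y z := by
  rw [ldd, udd]
  exact le_trans (lsum_le_usum _ _) (usum_mono_left (lsum_le_usum _ _) _)

end Stmt11Aux

open Stmt11Aux in
/-- **Extended Chain Inequality.** For `f : D → ℝ̄` and
`x₀ < x₁ < ⋯ < x_{n+1}` in `D`, and `1 ≤ i ≤ n`:
`min_j ⌊x_{j-1},x_j,x_{j+1};f⌋ ≤ ⌊x₀,x_i,x_{n+1};f⌋ ≤ ⌈x₀,x_i,x_{n+1};f⌉ ≤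
max_j ⌈x_{j-1},x_j,x_{j+1};f⌉`. -/
theorem stmt11 (D : Set ℝ) (f : ℝ → EReal) (n : ℕ) (hn : 1 ≤ n)
    (x : ℕ → ℝ) (hxD : ∀ k ≤ n + 1, x k ∈ D)
    (hxlt : ∀ k ≤ n, x k < x (k + 1))
    (i : ℕ) (hi1 : 1 ≤ i) (hi2 : i ≤ n) :
    (Finset.Icc 1 n).inf' (Finset.nonempty_Icc.mpr hn)
        (fun j => ldd f (x (j - 1)) (x j) (x (j + 1))) ≤
      ldd f (x 0) (x i) (x (n + 1)) ∧
    ldd f (x 0) (x i) (x (n + 1)) ≤ udd f (x 0) (x i) (x (n + 1)) ∧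
    udd f (x 0) (x i) (x (n + 1)) ≤
      (Finset.Icc 1 n).sup' (Finset.nonempty_Icc.mpr hn)
        (fun j => udd f (x (j - 1)) (x j) (x (j + 1))) := by
  refine ⟨?_, ldd_le_udd f _ _ _, ?_⟩
  · exact lower_chain f n hn x hxlt i hi1 hi2 _
      (fun j hj1 hj2 => Finset.inf'_le _ (Finset.mem_Icc.2 ⟨hj1, hj2⟩))
  · set S := (Finset.Icc 1 n).sup' (Finset.nonempty_Icc.mpr hn)
        (fun j => udd f (x (j - 1)) (x j) (x (j + 1))) with hS
    have key := lower_chain (fun t => - f t) n hn x hxlt i hi1 hi2 (-S)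
      (fun j hj1 hj2 => by
        rw [EReal.neg_le, ← udd_eq_neg_ldd]
        exact Finset.le_sup' (fun j => udd f (x (j - 1)) (x j) (x (j + 1)))
          (Finset.mem_Icc.2 ⟨hj1, hj2⟩))
    rw [udd_eq_neg_ldd]
    exact EReal.neg_le.mpr key
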